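/- The direct sum D_id = ⊕_{n<ω} C^n, containing exactly one finite chain of each size n ≥ 1, has exactly 2^{ℵ₀} siblings up to isomorphism. -/

import Mathlib

open Cardinal

/-- Two preorders are equimorphic (siblings) if each order-embeds into the other. -/
def Equimorphic (α : Type*) (β : Type*) [Preorder α] [Preorder β] : Prop :=
  Nonempty (α ↪o β) ∧ Nonempty (β ↪o α)

/-- The setoid identifying order-isomorphic equimorphic substructures. -/
def sibSetoid (α : Type*) [Preorder α] : Setoid {S : Set α // Equimorphic S α} :=
  ⟨fun S T => Nonempty ((S : Set α) ≃o (T : Set α)),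
    ⟨fun _ => ⟨OrderIso.refl _⟩, fun ⟨e⟩ => ⟨e.symm⟩, fun ⟨e⟩ ⟨f⟩ => ⟨e.trans f⟩⟩⟩

/-- The sibling number of a structure: the number of isomorphism classes of
substructures equimorphic to it (every sibling is isomorphic to such a substructure). -/
noncomputable def sibNumber (α : Type*) [Preorder α] : Cardinal :=
  #(Quotient (sibSetoid α))

namespace SibAux

abbrev Did := Σ n : ℕ, Fin (n + 1)

lemma fst_eq_of_le {x y : Did} (h : x ≤ y) : x.1 = y.1 := by cases h; rfl

/-- comparability implies same component -/
lemma fst_eq_of_comp {x y : Did} (h : x ≤ y ∨ y ≤ x) : x.1 = y.1 := by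
  rcases h with h | h
  · exact fst_eq_of_le h
  · exact (fst_eq_of_le h).symm

lemma comp_of_fst_eq {x y : Did} (h : x.1 = y.1) : x ≤ y ∨ y ≤ x := by
  obtain ⟨n, a⟩ := x
  obtain ⟨m, b⟩ := y
  cases h
  rcases le_total a b with h | h
  · exact Or.inl (Sigma.mk_le_mk_iff.2 h)
  · exact Or.inr (Sigma.mk_le_mk_iff.2 h)

lemma did_ext {x y : Did} (h1 : x.1 = y.1) (h2 : x.2.val = y.2.val) : x = y := by
  obtain ⟨n, a⟩ := x
  obtain ⟨m, b⟩ := y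
  cases h1
  exact congrArg (Sigma.mk n) (Fin.ext h2)

lemma mk_le_mk {n : ℕ} {a b : Fin (n + 1)} : (⟨n, a⟩ : Did) ≤ ⟨n, b⟩ ↔ a ≤ b :=
  Sigma.mk_le_mk_iff

/-- The substructure indexed by `A`. -/
def SA (A : Set ℕ) : Set Did := {x | x.1 ∈ A}

/-- From an order isomorphism between `SA A` and `SA B`, one inclusion. -/
lemma subset_of_iso {A B : Set ℕ} (φ : (SA A : Set Did) ≃o (SA B : Set Did)) : A ⊆ B := by
  intro n hn
  -- the elements of component n
  have hxmem : ∀ i : Fin (n + 1), (⟨n, i⟩ : Did) ∈ SA A := fun i => hn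
  set xi : Fin (n + 1) → (SA A : Set Did) := fun i => ⟨⟨n, i⟩, hxmem i⟩ with hxi
  set m : ℕ := (φ (xi 0)).1.1 with hm
  have hmB : m ∈ B := (φ (xi 0)).2
  -- every element of component n maps into component m
  have claim1 : ∀ i : Fin (n + 1), (φ (xi i)).1.1 = m := by
    intro i
    have h0 : xi 0 ≤ xi i := Sigma.mk_le_mk_iff.2 (Fin.zero_le i)
    have := φ.monotone h0
    have hcoe : ((φ (xi 0)) : Did) ≤ ((φ (xi i)) : Did) := this
    exact (fst_eq_of_le hcoe).symm
  -- the induced map on fibers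
  have hlt : ∀ i : Fin (n + 1), ((φ (xi i)).1.2 : ℕ) < m + 1 := by
    intro i
    have h1 := (φ (xi i)).1.2.isLt
    have h2 := claim1 i
    omega
  set F : Fin (n + 1) → Fin (m + 1) := fun i => ⟨((φ (xi i)).1.2 : ℕ), hlt i⟩ with hF
  have hFinj : Function.Injective F := by
    intro i j hij
    have hval : ((φ (xi i)).1.2 : ℕ) = ((φ (xi j)).1.2 : ℕ) := congrArg Fin.val hij
    have h1 : (φ (xi i)).1 = (φ (xi j)).1 :=
      did_ext ((claim1 i).trans (claim1 j).symm) hval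
    have : φ (xi i) = φ (xi j) := Subtype.ext h1
    have := φ.injective this
    have : (⟨n, i⟩ : Did) = ⟨n, j⟩ := congrArg Subtype.val this
    simpa using this
  have hFsurj : Function.Surjective F := by
    intro j
    have hy : (⟨m, j⟩ : Did) ∈ SA B := hmB
    set y : (SA B : Set Did) := ⟨⟨m, j⟩, hy⟩ with hyy
    set z := φ.symm y with hz
    -- z is comparable with xi 0 since their images are comparable
    have hcompim : (y : Did) ≤ ((φ (xi 0)) : Did) ∨ ((φ (xi 0)) : Did) ≤ (y : Did) :=
      comp_of_fst_eq (by simp [hyy, hm])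
    have hcomp : (z : Did) ≤ ((xi 0) : Did) ∨ ((xi 0) : Did) ≤ (z : Did) := by
      rcases hcompim with h | h
      · left
        have : y ≤ φ (xi 0) := h
        have := φ.symm.monotone this
        simpa [hz] using this
      · right
        have : φ (xi 0) ≤ y := h
        have := φ.symm.monotone this
        simpa [hz] using this
    have hzn : z.1.1 = n := fst_eq_of_comp hcomp
    have hzlt : (z.1.2 : ℕ) < n + 1 := by
      have h1 := z.1.2.isLt
      omega
    refine ⟨⟨(z.1.2 : ℕ), hzlt⟩, ?_⟩
    have hxz : xi ⟨(z.1.2 : ℕ), hzlt⟩ = z := by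
      apply Subtype.ext
      exact did_ext (by simp [hxi, hzn]) rfl
    have : φ (xi ⟨(z.1.2 : ℕ), hzlt⟩) = y := by rw [hxz, hz, φ.apply_symm_apply]
    apply Fin.ext
    simp only [hF]
    rw [this]
  have hcard : n + 1 = m + 1 := by
    have h1 : n + 1 ≤ m + 1 := by
      simpa using Fintype.card_le_of_injective F hFinj
    have h2 : m + 1 ≤ n + 1 := by
      simpa using Fintype.card_le_of_surjective F hFsurj
    omega
  have : n = m := by omega
  rw [this]; exact hmB

lemma eq_of_iso {A B : Set ℕ} (h : Nonempty ((SA A : Set Did) ≃o (SA B : Set Did))) :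
    A = B := by
  obtain ⟨φ⟩ := h
  exact le_antisymm (subset_of_iso φ) (subset_of_iso φ.symm)

/-- If `A` is infinite, the substructure `SA A` is equimorphic to `Did`. -/
lemma equim_of_infinite {A : Set ℕ} (hA : A.Infinite) : Equimorphic (SA A : Set Did) Did := by
  constructor
  · exact ⟨OrderEmbedding.subtype _⟩
  · classical
    haveI : Infinite A := hA.to_subtype
    set e := Nat.orderEmbeddingOfSet A with he
    have hemem : ∀ k, e k ∈ A := by
      intro k
      have : e k ∈ Set.range e := ⟨k, rfl⟩
      rwa [Nat.orderEmbeddingOfSet_range] at this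
    have hele : ∀ k, k ≤ e k := fun k => e.strictMono.le_apply
    have hlt : ∀ x : Did, (x.2 : ℕ) < e x.1 + 1 := by
      intro x
      have := x.2.isLt
      have := hele x.1
      omega
    refine ⟨⟨⟨fun x => ⟨⟨e x.1, ⟨(x.2 : ℕ), hlt x⟩⟩, hemem x.1⟩, ?_⟩, ?_⟩⟩
    · intro x y hxy
      have h1 : (⟨e x.1, (⟨(x.2 : ℕ), hlt x⟩ : Fin (e x.1 + 1))⟩ : Did)
          = ⟨e y.1, ⟨(y.2 : ℕ), hlt y⟩⟩ := congrArg Subtype.val hxy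
      have hfst : e x.1 = e y.1 := congrArg Sigma.fst h1
      have hfst' : x.1 = y.1 := e.injective hfst
      have hsnd := congrArg (fun s : Did => (s.2 : ℕ)) h1
      exact did_ext hfst' hsnd
    · intro x y
      constructor
      · intro h
        have hcoe : (⟨e x.1, (⟨(x.2 : ℕ), hlt x⟩ : Fin (e x.1 + 1))⟩ : Did)
            ≤ ⟨e y.1, ⟨(y.2 : ℕ), hlt y⟩⟩ := h
        have hfst : e x.1 = e y.1 := fst_eq_of_le hcoe
        have hfst' : x.1 = y.1 := e.injective hfst
        obtain ⟨n, a⟩ := x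
        obtain ⟨p, b⟩ := y
        obtain rfl : n = p := hfst'
        apply mk_le_mk.2
        have hval := mk_le_mk.1 hcoe
        exact hval
      · intro h
        have hfst' : x.1 = y.1 := fst_eq_of_le h
        obtain ⟨n, a⟩ := x
        obtain ⟨p, b⟩ := y
        obtain rfl : n = p := hfst'
        have hab : a ≤ b := mk_le_mk.1 h
        show (⟨e n, (⟨(a : ℕ), _⟩ : Fin (e n + 1))⟩ : Did) ≤ ⟨e n, ⟨(b : ℕ), _⟩⟩
        exact mk_le_mk.2 hab

/-- The coding of an arbitrary set of naturals into an infinite one. -/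
def g (A : Set ℕ) : Set ℕ := {k | ∃ p, k = 2 * p} ∪ {k | ∃ p ∈ A, k = 2 * p + 1}

lemma g_infinite (A : Set ℕ) : (g A).Infinite := by
  refine Set.infinite_of_injective_forall_mem (f := fun p : ℕ => 2 * p) ?_ ?_
  · intro a b h; simpa using h
  · intro p; exact Or.inl ⟨p, rfl⟩

lemma g_injective : Function.Injective g := by
  intro A B h
  ext p
  have hmem : ∀ C : Set ℕ, (2 * p + 1 ∈ g C) ↔ p ∈ C := by
    intro C
    constructor
    · rintro (⟨q, hq⟩ | ⟨q, hq, hq2⟩)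
      · omega
      · obtain rfl : q = p := by omega
        exact hq
    · intro hp; exact Or.inr ⟨p, hp, rfl⟩
  rw [← hmem A, ← hmem B, h]

end SibAux

open SibAux in
theorem sib_Did_continuum : sibNumber (Σ n : ℕ, Fin (n + 1)) = Cardinal.continuum := by
  apply le_antisymm
  · calc sibNumber Did ≤ #{S : Set Did // Equimorphic S Did} := Cardinal.mk_quotient_le
      _ ≤ #(Set Did) := Cardinal.mk_subtype_le _
      _ = 2 ^ #Did := Cardinal.mk_set
      _ = 2 ^ Cardinal.aleph0 := by rw [Cardinal.mk_eq_aleph0]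
      _ = Cardinal.continuum := Cardinal.two_power_aleph0
  · have : Cardinal.continuum = #(Set ℕ) := by
      rw [Cardinal.mk_set, Cardinal.mk_nat, Cardinal.two_power_aleph0]
    rw [this]
    refine Cardinal.mk_le_of_injective (f := fun A : Set ℕ =>
      (Quotient.mk (sibSetoid Did) ⟨SA (g A), equim_of_infinite (g_infinite A)⟩)) ?_
    intro A B h
    have := Quotient.exact h
    exact g_injective (eq_of_iso this)
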